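/- Let K be a set of explanations of an LPAD T and let M be a multivalued decision diagram representing the Boolean function f_K. Let K_M be the set of composite choices obtained by interpreting each path of M from the root to a 1-leaf as an explanation. Then K and K_M identify the same set of worlds, i.e., ω_K = ω_{K_M}. -/

import Mathlib

namespace DistSem

/-! ### First-order syntax

Terms over a type `F` of function symbols (constants are 0-ary applications),
atoms over a type `P` of predicate symbols.  A language with a finite number of
function and constant symbols is modelled by a `[Finite F]` hypothesis (and
finitely many predicates by `[Finite P]`). -/

inductive FOTerm (F : Type) : Type
  | var : ℕ → FOTerm F
  | app : F → List (FOTerm F) → FOTerm F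

namespace FOTerm

variable {F : Type}

/-- The size of a term. -/
noncomputable def size (t : FOTerm F) : ℕ := sizeOf t

/-- `HasVar t n` holds iff the variable `n` occurs in `t`. -/
inductive HasVar : FOTerm F → ℕ → Prop
  | var (n : ℕ) : HasVar (.var n) n
  | app {f : F} {args : List (FOTerm F)} {t : FOTerm F} {n : ℕ} :
      t ∈ args → HasVar t n → HasVar (.app f args) n

/-- A term is ground if it contains no variables. -/
inductive Ground : FOTerm F → Prop
  | app {f : F} {args : List (FOTerm F)} : (∀ t ∈ args, Ground t) → Ground (.app f args)

/-- Applying a substitution (an assignment of terms to variables) to a term. -/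
def subst (θ : ℕ → FOTerm F) : FOTerm F → FOTerm F
  | .var n => θ n
  | .app f args => .app f (args.attach.map fun t => subst θ t.1)
decreasing_by
  have := List.sizeOf_lt_of_mem t.2
  simp only [FOTerm.app.sizeOf_spec]
  omega

end FOTerm

/-- A logical atom: a predicate symbol applied to a list of terms. -/
structure FOAtom (F P : Type) : Type where
  pred : P
  args : List (FOTerm F)

namespace FOAtom

variable {F P : Type}

def subst (θ : ℕ → FOTerm F) (A : FOAtom F P) : FOAtom F P :=
  ⟨A.pred, A.args.map (FOTerm.subst θ)⟩

def Ground (A : FOAtom F P) : Prop := ∀ t ∈ A.args, t.Ground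

def HasVar (A : FOAtom F P) (n : ℕ) : Prop := ∃ t ∈ A.args, t.HasVar n

/-- `A` is a ground instance of the (possibly non-ground) atom `Q`. -/
def InstanceOf (Q A : FOAtom F P) : Prop := A.Ground ∧ (A = Q ∨ ∃ θ, A = Q.subst θ)

end FOAtom

/-- A literal: an atom or a negated atom. -/
inductive Lit (F P : Type) : Type
  | pos (A : FOAtom F P)
  | neg (A : FOAtom F P)

namespace Lit

variable {F P : Type}

def subst (θ : ℕ → FOTerm F) : Lit F P → Lit F P
  | pos A => pos (A.subst θ)
  | neg A => neg (A.subst θ)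

def Ground : Lit F P → Prop
  | pos A => A.Ground
  | neg A => A.Ground

/-- The atom of a literal. -/
def atom : Lit F P → FOAtom F P
  | pos A => A
  | neg A => A

def HasVar (l : Lit F P) (n : ℕ) : Prop := l.atom.HasVar n

end Lit

/-- A normal clause `head ← body`. -/
structure Clause (F P : Type) : Type where
  head : FOAtom F P
  body : List (Lit F P)

namespace Clause

variable {F P : Type}

def subst (θ : ℕ → FOTerm F) (C : Clause F P) : Clause F P :=
  ⟨C.head.subst θ, C.body.map (Lit.subst θ)⟩

def Ground (C : Clause F P) : Prop := C.head.Ground ∧ ∀ L ∈ C.body, L.Ground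

def HasVar (C : Clause F P) (n : ℕ) : Prop :=
  C.head.HasVar n ∨ ∃ L ∈ C.body, L.HasVar n

/-- `Cg` is a ground instance of the clause `C`. -/
def Instance (C Cg : Clause F P) : Prop :=
  Cg.Ground ∧ (Cg = C ∨ ∃ θ, Cg = C.subst θ)

end Clause

/-- A normal logic program, viewed as a set of clauses.  (Finiteness of the set of
clauses of a user program is imposed by explicit hypotheses; ground instantiations
and worlds of LPADs are again of this type, but may be infinite.) -/
abbrev NormalProgram (F P : Type) := Set (Clause F P)

variable {F P : Type}

/-- The ground instantiation `ground(P)` of a program. -/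
def instancesOf (Pr : NormalProgram F P) : Set (Clause F P) :=
  {Cg | ∃ C ∈ Pr, C.Instance Cg}

/-! ### Three-valued interpretations and the iterated fixed point characterization
of the well-founded semantics (Przymusinski 1989). -/

/-- A 3-valued interpretation `⟨Tr; Fa⟩`. -/
structure Interp (F P : Type) : Type where
  tr : Set (FOAtom F P)
  fa : Set (FOAtom F P)

/-- A literal is true in `I`, or is a (positive) member of `Tr`. -/
def litTrueIn (I : Interp F P) (Tr : Set (FOAtom F P)) : Lit F P → Prop
  | .pos A => A ∈ I.tr ∨ A ∈ Tr
  | .neg A => A ∈ I.fa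

/-- A literal is true in the 3-valued interpretation `I`. -/
def litTrue (I : Interp F P) : Lit F P → Prop
  | .pos A => A ∈ I.tr
  | .neg A => A ∈ I.fa

/-- A literal is false in `I`, or is a (positive) member of `Fa`. -/
def litFalseIn (I : Interp F P) (Fa : Set (FOAtom F P)) : Lit F P → Prop
  | .pos A => A ∈ I.fa ∨ A ∈ Fa
  | .neg A => A ∈ I.tr

/-- The operator `True^P_I(Tr)`: the set of (ground) atoms `A` not true in `I` for
which there are a clause of `P` and a ground substitution `θ` yielding a ground
instance with head `A` all of whose body literals are true in `I` or belong to
`Tr`. -/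
def TrueOp (Pr : NormalProgram F P) (I : Interp F P) (Tr : Set (FOAtom F P)) :
    Set (FOAtom F P) :=
  {A | A ∉ I.tr ∧ ∃ Cg ∈ instancesOf Pr, Cg.head = A ∧ ∀ L ∈ Cg.body, litTrueIn I Tr L}

/-- The operator `False^P_I(Fa)`: the set of ground atoms `A` not false in `I` such
that every ground instance of a clause of `P` with head `A` has a body literal
false in `I` or belonging to `Fa`. -/
def FalseOp (Pr : NormalProgram F P) (I : Interp F P) (Fa : Set (FOAtom F P)) :
    Set (FOAtom F P) :=
  {A | A ∉ I.fa ∧ A.Ground ∧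
    ∀ Cg ∈ instancesOf Pr, Cg.head = A → ∃ L ∈ Cg.body, litFalseIn I Fa L}

/-- `T^P_I`: the least fixed point of `True^P_I` (starting from `∅`), presented via
Knaster–Tarski as the intersection of the prefixed points. -/
def Tset (Pr : NormalProgram F P) (I : Interp F P) : Set (FOAtom F P) :=
  ⋂₀ {S | TrueOp Pr I S ⊆ S}

/-- `F^P_I`: the greatest fixed point of `False^P_I` (starting from the Herbrand
base), presented via Knaster–Tarski as the union of the postfixed points. -/
def Fset (Pr : NormalProgram F P) (I : Interp F P) : Set (FOAtom F P) :=
  ⋃₀ {S | S ⊆ FalseOp Pr I S}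

/-- The finite iterates of `True^P_I` starting from `∅`. -/
def TrueIter (Pr : NormalProgram F P) (I : Interp F P) : ℕ → Set (FOAtom F P)
  | 0 => ∅
  | n + 1 => TrueOp Pr I (TrueIter Pr I n)

/-- The iterated fixed point: `WFM_0 = ⟨∅;∅⟩`,
`WFM_{α+1} = WFM_α ∪ ⟨T_{WFM_α}; F_{WFM_α}⟩`, with unions at limit ordinals. -/
noncomputable def WFMStage (Pr : NormalProgram F P) : Ordinal.{0} → Interp F P
  | o =>
    ⟨{A | ∃ o' : Ordinal.{0}, ∃ _ : o' < o,
        A ∈ (WFMStage Pr o').tr ∪ Tset Pr (WFMStage Pr o')},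
     {A | ∃ o' : Ordinal.{0}, ∃ _ : o' < o,
        A ∈ (WFMStage Pr o').fa ∪ Fset Pr (WFMStage Pr o')}⟩
  termination_by o => o

/-- The well-founded model `WFM(P)`, i.e. the limit of the iterated fixed point. -/
noncomputable def WFM (Pr : NormalProgram F P) : Interp F P :=
  ⟨{A | ∃ o : Ordinal.{0}, A ∈ (WFMStage Pr o).tr},
   {A | ∃ o : Ordinal.{0}, A ∈ (WFMStage Pr o).fa}⟩

end DistSem

namespace DistSem

variable {F P : Type}

/-! ### The bounded-term-size property for (possibly ground and infinite) programs

For the ground instantiation of a program — for example a world of an LPAD —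
bounding the size of the grounding substitutions used by `True^P_I` amounts to
bounding the sizes of the ground clause instances used, which is how we state the
property here. -/

/-- `Cg` is a ground clause instance used to produce an atom in `TrueOp Pr I Tr`. -/
def UsedInstance (Pr : NormalProgram F P) (I : Interp F P) (Tr : Set (FOAtom F P))
    (Cg : Clause F P) : Prop :=
  Cg ∈ instancesOf Pr ∧ Cg.Ground ∧ Cg.head ∉ I.tr ∧ ∀ L ∈ Cg.body, litTrueIn I Tr L

/-- The application `True^P_I(Tr)` has the bounded-term-size property with bound
`L`: every ground clause instance (equivalently, every grounding substitution)
used to produce an atom in `True^P_I(Tr)` has size less than `L`. -/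
def BoundedAppSize (Pr : NormalProgram F P) (I : Interp F P) (Tr : Set (FOAtom F P))
    (L : ℕ) : Prop :=
  ∀ Cg, UsedInstance Pr I Tr Cg → sizeOf Cg < L

/-- The program `Pr` has the bounded-term-size property: every application of
`True^P_I` used to construct `WFM(P)` is bounded with the same bound `L`.  (The
applications used are those with `I = WFM_α` for some stage `α` and `Tr` a set
arising in the iteration of the least fixed point of `True^P_I`; all such sets are
subsets of `T^P_I`.) -/
def BTSProg (Pr : NormalProgram F P) : Prop :=
  ∃ L : ℕ, ∀ (o : Ordinal.{0}) (Tr : Set (FOAtom F P)),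
    Tr ⊆ Tset Pr (WFMStage Pr o) → BoundedAppSize Pr (WFMStage Pr o) Tr L

end DistSem

namespace DistSem

/-! ### Logic Programs with Annotated Disjunctions and the distribution semantics -/

/-- A clause of a Logic Program with Annotated Disjunctions:
`H1:α1 ∨ … ∨ Hn:αn ← L1,…,Lm`. -/
structure LPADClause (F P : Type) : Type where
  head : List (FOAtom F P × ℝ)
  body : List (Lit F P)

namespace LPADClause

variable {F P : Type}

def subst (θ : ℕ → FOTerm F) (C : LPADClause F P) : LPADClause F P :=
  ⟨C.head.map fun h => (h.1.subst θ, h.2), C.body.map (Lit.subst θ)⟩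

def Ground (C : LPADClause F P) : Prop :=
  (∀ h ∈ C.head, (h.1 : FOAtom F P).Ground) ∧ ∀ L ∈ C.body, L.Ground

/-- `Cg` is a ground instance of the LPAD clause `C`. -/
def Instance (C Cg : LPADClause F P) : Prop :=
  Cg.Ground ∧ (Cg = C ∨ ∃ θ, Cg = C.subst θ)

/-- The sum of the head annotations of a clause. -/
noncomputable def annSum (C : LPADClause F P) : ℝ := (C.head.map Prod.snd).sum

/-- Well-formed annotations: each `αi ∈ [0,1]` and `Σ αi ≤ 1`. -/
def AnnOK (C : LPADClause F P) : Prop :=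
  (∀ h ∈ C.head, 0 ≤ h.2 ∧ h.2 ≤ 1) ∧ annSum C ≤ 1

end LPADClause

/-- An LPAD: a finite set of annotated disjunctive clauses with well-formed
annotations. -/
structure LPAD (F P : Type) : Type where
  clauses : Set (LPADClause F P)
  finite : clauses.Finite
  annOK : ∀ C ∈ clauses, C.AnnOK

variable {F P : Type}

/-- The ground instantiation of a set of LPAD clauses. -/
def lground (S : Set (LPADClause F P)) : Set (LPADClause F P) :=
  {Cg | ∃ C ∈ S, C.Instance Cg}

/-- An atomic choice `(Cθ, i)`: for the ground clause instance `Cθ`, head atom `i`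
is chosen.  The index `i = |head(C)|` denotes the implicit extra atom `null`
(available only when the annotations sum to less than 1). -/
abbrev AtomicChoice (F P : Type) := LPADClause F P × ℕ

/-- The atomic choice is a legitimate one for the ground instantiation of `S`. -/
def ValidChoice (S : Set (LPADClause F P)) (ac : AtomicChoice F P) : Prop :=
  ac.1 ∈ lground S ∧
    (ac.2 < ac.1.head.length ∨ (ac.2 = ac.1.head.length ∧ ac.1.annSum < 1))

/-- A set of atomic choices is consistent: at most one head is selected for each
ground clause instance. -/
def Consistent (κ : Set (AtomicChoice F P)) : Prop :=
  ∀ ac ∈ κ, ∀ ac' ∈ κ, ac.1 = ac'.1 → ac.2 = ac'.2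

/-- A composite choice for (the ground instantiation of) `S`: a consistent set of
atomic choices. -/
def Composite (S : Set (LPADClause F P)) (κ : Set (AtomicChoice F P)) : Prop :=
  (∀ ac ∈ κ, ValidChoice S ac) ∧ Consistent κ

/-- A selection: a composite choice containing an atomic choice for *every* ground
clause instance. -/
def Selection (S : Set (LPADClause F P)) (σ : Set (AtomicChoice F P)) : Prop :=
  Composite S σ ∧ ∀ Cg ∈ lground S, ∃ i, (Cg, i) ∈ σ

/-- The set of worlds of `S`; a world is identified with the selection that
determines it. -/
def Worlds (S : Set (LPADClause F P)) : Set (Set (AtomicChoice F P)) :=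
  {σ | Selection S σ}

/-- The normal logic program determined by a selection: for each atomic choice
selecting an actual head atom (not `null`), the corresponding non-disjunctive
ground clause. -/
def progOf (σ : Set (AtomicChoice F P)) : NormalProgram F P :=
  {C | ∃ ac ∈ σ, ∃ h : ac.2 < ac.1.head.length,
        C = ⟨(ac.1.head.get ⟨ac.2, h⟩).1, ac.1.body⟩}

/-- The ground atom `A` is true in the world `σ` (i.e. in the well-founded model of
its program). -/
def TrueInWorld (σ : Set (AtomicChoice F P)) (A : FOAtom F P) : Prop :=
  A ∈ (WFM (progOf σ)).tr

/-- `ω_κ`: the set of worlds whose selection extends `κ`. -/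
def omegaC (S : Set (LPADClause F P)) (κ : Set (AtomicChoice F P)) :
    Set (Set (AtomicChoice F P)) :=
  {σ ∈ Worlds S | κ ⊆ σ}

/-- `ω_K = ⋃_{κ ∈ K} ω_κ`. -/
def omegaK (S : Set (LPADClause F P)) (K : Set (Set (AtomicChoice F P))) :
    Set (Set (AtomicChoice F P)) :=
  ⋃ κ ∈ K, omegaC S κ

/-- `κ` is an explanation for the ground atom `A`: `A` is true in every world of
`ω_κ`. -/
def Explanation (S : Set (LPADClause F P)) (κ : Set (AtomicChoice F P))
    (A : FOAtom F P) : Prop :=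
  Composite S κ ∧ ∀ σ ∈ omegaC S κ, TrueInWorld σ A

/-- `K` is covering for `A`: every world in which `A` is true belongs to `ω_K`. -/
def CoveringFor (S : Set (LPADClause F P)) (K : Set (Set (AtomicChoice F P)))
    (A : FOAtom F P) : Prop :=
  ∀ σ ∈ Worlds S, TrueInWorld σ A → σ ∈ omegaK S K

/-- The LPAD `T` is sound: every world has a two-valued well-founded model. -/
def LPAD.Sound (T : LPAD F P) : Prop :=
  ∀ σ ∈ Worlds T.clauses, ∀ A : FOAtom F P, A.Ground →
    A ∈ (WFM (progOf σ)).tr ∨ A ∈ (WFM (progOf σ)).fa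

/-- The ground LPAD given by the clause set `S` has the bounded-term-size property:
every world of it does. -/
def BTSL (S : Set (LPADClause F P)) : Prop :=
  ∀ σ ∈ Worlds S, BTSProg (progOf σ)

/-- The LPAD `T` has the bounded-term-size property. -/
def LPAD.BTS (T : LPAD F P) : Prop := BTSL T.clauses

end DistSem

namespace DistSem

/-! ### Multivalued decision diagrams -/

/-- A multivalued decision diagram over a type `V` of multivalued variables: at
each inner node one multivalued variable is tested, with one child for each of its
values `0, 1, …`; the leaves are labelled `0` (`false`) or `1` (`true`). -/
inductive MDD (V : Type) : Type
  | leaf : Bool → MDD V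
  | node : V → List (MDD V) → MDD V

namespace MDD

variable {V : Type}

/-- Evaluating an MDD under an assignment of values to the variables: traverse the
diagram from the root, at each node following the child corresponding to the value
of the variable tested there, and return the label of the leaf that is reached. -/
def eval (a : V → ℕ) : MDD V → Bool
  | .leaf b => b
  | .node v cs =>
      if h : a v < cs.length then eval a (cs.get ⟨a v, h⟩) else false
decreasing_by
  have := List.sizeOf_lt_of_mem (cs.get_mem ⟨a v, h⟩)
  simp only [MDD.node.sizeOf_spec]
  omega

/-- `PathChoices M s`: `s` is the set of pairs `(variable, value)` read along some
path of `M` from the root to a leaf labelled 1. -/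
inductive PathChoices : MDD V → Set (V × ℕ) → Prop
  | leaf : PathChoices (.leaf true) ∅
  | node {v : V} {cs : List (MDD V)} {i : ℕ} {m : MDD V} {s : Set (V × ℕ)} :
      cs[i]? = some m → PathChoices m s → PathChoices (.node v cs) (insert (v, i) s)

/-- The variable `v` is tested somewhere in the diagram. -/
inductive Occurs (v : V) : MDD V → Prop
  | here {cs : List (MDD V)} : Occurs v (.node v cs)
  | child {w : V} {cs : List (MDD V)} {m : MDD V} :
      m ∈ cs → Occurs v m → Occurs v (.node w cs)

/-- The diagram is read-once: no variable is tested twice along a path (each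
variable tested at a node does not occur below it). -/
inductive ReadOnce : MDD V → Prop
  | leaf (b : Bool) : ReadOnce (.leaf b)
  | node {v : V} {cs : List (MDD V)} :
      (∀ m ∈ cs, ReadOnce m) → (∀ m ∈ cs, ¬ Occurs v m) → ReadOnce (.node v cs)

end MDD

end DistSem

namespace DistSem

variable {F P : Type}

/-- The Boolean function `f_K` determined by a set `K` of composite choices: the
multivalued variables are the ground clause instances, the atomic choice
`(Cθ, i)` is the equation `X_{Cθ} = i`, each composite choice is the conjunction
of its equations, and `f_K` is the disjunction over `K`. -/
def fK (K : Set (Set (AtomicChoice F P))) (a : LPADClause F P → ℕ) : Prop :=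
  ∃ κ ∈ K, ∀ ac ∈ κ, a ac.1 = ac.2

/-- The assignment of values to the multivalued variables determined by a
selection: each ground clause instance is mapped to the index of the head chosen
for it. -/
noncomputable def assignOf (σ : Set (AtomicChoice F P)) : LPADClause F P → ℕ :=
  fun Cg => sInf {i | (Cg, i) ∈ σ}

/-- `K_M`: the set of composite choices obtained by reading each path of `M` from
the root to a 1-leaf as an explanation. -/
def pathsK (M : MDD (LPADClause F P)) : Set (Set (AtomicChoice F P)) :=
  {κ | MDD.PathChoices M κ}

section AuxMDD

namespace MDD

variable {V : Type}

/-- The maximum number of children of any node of the diagram. -/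
def maxWidth : MDD V → ℕ
  | .leaf _ => 0
  | .node _ cs => (cs.attach.map fun m => maxWidth m.1).foldr max cs.length
decreasing_by
  have := List.sizeOf_lt_of_mem m.2
  simp only [MDD.node.sizeOf_spec]
  omega

private lemma le_foldr_max (l : List ℕ) (b : ℕ) : b ≤ l.foldr max b := by
  induction l with
  | nil => simp
  | cons x xs ih => simpa using Or.inr ih

private lemma mem_le_foldr_max {l : List ℕ} {x : ℕ} (h : x ∈ l) (b : ℕ) :
    x ≤ l.foldr max b := by
  induction l with
  | nil => simp at h
  | cons y ys ih =>
    rcases List.mem_cons.mp h with rfl | h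
    · simp
    · simpa using Or.inr (ih h)

lemma length_le_maxWidth (v : V) (cs : List (MDD V)) :
    cs.length ≤ maxWidth (.node v cs) := by
  rw [maxWidth]
  exact le_foldr_max _ _

lemma child_le_maxWidth {m : MDD V} {cs : List (MDD V)} (v : V) (h : m ∈ cs) :
    maxWidth m ≤ maxWidth (.node v cs) := by
  rw [maxWidth]
  have hmem : maxWidth m ∈ cs.attach.map fun m => maxWidth m.1 :=
    List.mem_map.mpr ⟨⟨m, h⟩, List.mem_attach _ _, rfl⟩
  exact mem_le_foldr_max hmem _

lemma path_lt_maxWidth {M : MDD V} {κ : Set (V × ℕ)} (hp : PathChoices M κ) :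
    ∀ v i, (v, i) ∈ κ → i < maxWidth M := by
  induction hp with
  | leaf => intro v i h; simp at h
  | @node v cs i m s hget hpath ih =>
    intro v' i' h
    have hm : m ∈ cs := List.mem_of_getElem? hget
    have hi : i < cs.length := by
      by_contra hn
      rw [List.getElem?_eq_none (le_of_not_gt hn)] at hget
      exact Option.some_ne_none m hget.symm
    rcases Set.mem_insert_iff.mp h with heq | hmem
    · have : i' = i := by simpa using congrArg Prod.snd heq
      subst this
      exact lt_of_lt_of_le hi (length_le_maxWidth v cs)
    · exact lt_of_lt_of_le (ih v' i' hmem) (child_le_maxWidth v hm)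

lemma eval_of_path {a : V → ℕ} {M : MDD V} {κ : Set (V × ℕ)}
    (hp : PathChoices M κ) (hag : ∀ ac ∈ κ, a ac.1 = ac.2) : M.eval a = true := by
  induction hp with
  | leaf => rw [MDD.eval]
  | @node v cs i m s hget hpath ih =>
    have hav : a v = i := hag (v, i) (Set.mem_insert _ _)
    have hi : i < cs.length := by
      by_contra hn
      rw [List.getElem?_eq_none (le_of_not_gt hn)] at hget
      exact Option.some_ne_none m hget.symm
    subst hav
    rw [MDD.eval, dif_pos hi]
    have hget' : cs.get ⟨a v, hi⟩ = m := by
      rw [List.get_eq_getElem, ← Option.some_inj, ← List.getElem?_eq_getElem hi]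
      exact hget
    rw [hget']
    exact ih fun ac hac => hag ac (Set.mem_insert_of_mem _ hac)

lemma path_of_eval {a : V → ℕ} (M : MDD V) (h : M.eval a = true) :
    ∃ κ, PathChoices M κ ∧ ∀ ac ∈ κ, a ac.1 = ac.2 := by
  suffices H : ∀ n (M : MDD V), sizeOf M ≤ n → M.eval a = true →
      ∃ κ, PathChoices M κ ∧ ∀ ac ∈ κ, a ac.1 = ac.2 from H (sizeOf M) M le_rfl h
  intro n
  induction n with
  | zero =>
    intro M hM
    cases M <;> simp only [MDD.leaf.sizeOf_spec, MDD.node.sizeOf_spec] at hM <;> omega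
  | succ n ih =>
    intro M hM hev
    cases M with
    | leaf b =>
      rw [MDD.eval] at hev
      subst hev
      exact ⟨∅, .leaf, by simp⟩
    | node v cs =>
      rw [MDD.eval] at hev
      split at hev
      · rename_i hlt
        have hsz : sizeOf (cs.get ⟨a v, hlt⟩) ≤ n := by
          have := List.sizeOf_lt_of_mem (cs.get_mem ⟨a v, hlt⟩)
          simp only [MDD.node.sizeOf_spec] at hM
          omega
        obtain ⟨κ, hp, hag⟩ := ih _ hsz hev
        have hgd : cs[a v]? = some (cs.get ⟨a v, hlt⟩) := by
          rw [List.get_eq_getElem]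
          exact List.getElem?_eq_getElem hlt
        refine ⟨insert (v, a v) κ, .node hgd hp, ?_⟩
        intro ac hac
        rcases Set.mem_insert_iff.mp hac with rfl | hmem
        · rfl
        · exact hag ac hmem
      · exact absurd hev (by simp)

end MDD

variable {F P : Type}

lemma assignOf_eq {σ : Set (AtomicChoice F P)} (hc : Consistent σ)
    {Cg : LPADClause F P} {i : ℕ} (h : (Cg, i) ∈ σ) : assignOf σ Cg = i := by
  have hs : {j | (Cg, j) ∈ σ} = {i} := by
    ext j
    simp only [Set.mem_setOf_eq, Set.mem_singleton_iff]
    exact ⟨fun hj => hc _ hj _ h rfl, fun hj => hj ▸ h⟩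
  simp [assignOf, hs]

end AuxMDD

/-- Let `K` be a set of explanations (composite choices) of an
LPAD `T` and let `M` be a multivalued decision diagram representing the Boolean
function `f_K`: for every assignment of values to the multivalued variables,
evaluating `M` returns the value of `f_K`.  Let
`K_M` be the set of composite choices obtained by interpreting each root-to-1-leaf
path of `M` as an explanation.  Then `K` and `K_M` identify the same set of
worlds: `ω_K = ω_{K_M}`. -/
theorem mdd_paths_identify_same_worlds {F P : Type} (T : LPAD F P)
    (K : Set (Set (AtomicChoice F P))) (hK : ∀ κ ∈ K, Composite T.clauses κ)
    (M : MDD (LPADClause F P)) (hro : M.ReadOnce)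
    (hrep : ∀ a : LPADClause F P → ℕ, (M.eval a = true) ↔ fK K a) :
    omegaK T.clauses K = omegaK T.clauses (pathsK M) := by
  classical
  have hconsW : ∀ σ ∈ Worlds T.clauses, Consistent σ := fun σ h => h.1.2
  ext σ
  simp only [omegaK, omegaC, Set.mem_iUnion, Set.mem_sep_iff, pathsK, Set.mem_setOf_eq]
  constructor
  · rintro ⟨κ, hκK, hσW, hκσ⟩
    have hconsσ : Consistent σ := hconsW σ hσW
    set a' : LPADClause F P → ℕ :=
      fun Cg => if ∃ i, (Cg, i) ∈ σ then assignOf σ Cg else M.maxWidth with ha'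
    have hfa' : fK K a' := by
      refine ⟨κ, hκK, ?_⟩
      rintro ⟨c, j⟩ hac
      have hval := ((hK κ hκK).1 _ hac).1
      obtain ⟨i, hi⟩ := hσW.2 c hval
      have h1 : assignOf σ c = i := assignOf_eq hconsσ hi
      have h2 : (c, i) ∈ σ := hi
      have h3 : (c, j) ∈ σ := hκσ hac
      have hji : j = i := hconsσ _ h3 _ h2 rfl
      simp only [ha']
      rw [if_pos ⟨i, hi⟩, h1, hji]
    have heval' : M.eval a' = true := (hrep a').mpr hfa'
    obtain ⟨κ', hp', hag'⟩ := MDD.path_of_eval M heval'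
    refine ⟨κ', hp', hσW, ?_⟩
    rintro ⟨c, j⟩ hac
    have hagj : a' c = j := hag' _ hac
    by_cases hex : ∃ i, (c, i) ∈ σ
    · obtain ⟨i, hi⟩ := hex
      have h1 : assignOf σ c = i := assignOf_eq hconsσ hi
      have : j = i := by
        simp only [ha'] at hagj
        rw [if_pos ⟨i, hi⟩, h1] at hagj
        omega
      subst this
      exact hi
    · exfalso
      have h1 : a' c = M.maxWidth := by simp only [ha']; rw [if_neg hex]
      have h2 : j < M.maxWidth := MDD.path_lt_maxWidth hp' c j hac
      omega
  · rintro ⟨κ, hpκ, hσW, hκσ⟩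
    have hconsσ : Consistent σ := hconsW σ hσW
    have heval : M.eval (assignOf σ) = true :=
      MDD.eval_of_path hpκ fun ac hac => assignOf_eq hconsσ (hκσ hac)
    obtain ⟨κ', hκ'K, hag⟩ := (hrep _).mp heval
    refine ⟨κ', hκ'K, hσW, ?_⟩
    rintro ⟨c, j⟩ hac
    have hval := ((hK κ' hκ'K).1 _ hac).1
    obtain ⟨i, hi⟩ := hσW.2 c hval
    have h1 : assignOf σ c = i := assignOf_eq hconsσ hi
    have h2 : assignOf σ c = j := hag _ hac
    have : j = i := by omega
    subst this
    exact hi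


end DistSem
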